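/- Let φ : Γ → ℂ be a function with φ(e) = 1. Suppose π is a unitary representation of G = Γ≀𝔖∞ on a complex Hilbert space H with a cyclic unit vector ξ such that ⟨π(sγ)ξ, ξ⟩ = φ_reg(sγ) for all s ∈ 𝔖∞ and γ ∈ Γ^∞_e (i.e. ⟨π(sγ)ξ, ξ⟩ = ∏_k φ(γ_k) if s is the identity permutation and = 0 otherwise). Then π is a factor representation: every operator in the center π(G)′ ∩ π(G)″ is a scalar multiple of the identity. -/

import Mathlib

open scoped Classical ComplexOrder
open Filter Topology

noncomputable section

namespace DN

local notation "⟪" x ", " y "⟫" => @inner ℂ _ _ x y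

/-- The group `𝔖∞` of finitely supported permutations of `ℕ`. -/
def SInf : Subgroup (Equiv.Perm ℕ) where
  carrier := {s | {i | s i ≠ i}.Finite}
  one_mem' := by simp
  mul_mem' := by
    intro s t hs ht
    refine Set.Finite.subset (hs.union ht) fun i hi => ?_
    simp only [Set.mem_setOf_eq, Set.mem_union, Equiv.Perm.mul_apply] at hi ⊢
    by_contra h
    push_neg at h
    rw [h.2, h.1] at hi
    exact hi rfl
  inv_mem' := by
    intro s hs
    refine Set.Finite.subset hs fun i hi => ?_
    simp only [Set.mem_setOf_eq] at hi ⊢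
    intro h
    exact hi (Equiv.Perm.inv_eq_iff_eq.mpr h.symm)

theorem mem_SInf (s : Equiv.Perm ℕ) : s ∈ SInf ↔ {i | s i ≠ i}.Finite := Iff.rfl

/-- The group `Γ^∞_e` of finitely supported sequences in `Γ`. -/
def GammaE (Γ : Type*) [Group Γ] : Subgroup (ℕ → Γ) where
  carrier := {γ | {i | γ i ≠ 1}.Finite}
  one_mem' := by simp
  mul_mem' := by
    intro f g hf hg
    refine Set.Finite.subset (hf.union hg) fun i hi => ?_
    simp only [Set.mem_setOf_eq, Set.mem_union, Pi.mul_apply] at hi ⊢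
    by_contra h
    push_neg at h
    rw [h.1, h.2] at hi
    exact hi (one_mul 1)
  inv_mem' := by
    intro f hf
    refine Set.Finite.subset hf fun i hi => ?_
    simp only [Set.mem_setOf_eq, Pi.inv_apply, ne_eq, inv_eq_one] at hi ⊢
    exact hi

theorem mem_GammaE {Γ : Type*} [Group Γ] (γ : ℕ → Γ) :
    γ ∈ GammaE Γ ↔ {i | γ i ≠ 1}.Finite := Iff.rfl

/-- The permutation action of `Equiv.Perm ℕ` on `ℕ → Γ`. -/
def permMulAut (Γ : Type*) [Group Γ] (s : Equiv.Perm ℕ) : MulAut (ℕ → Γ) where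
  toFun γ := γ ∘ s.symm
  invFun γ := γ ∘ s
  left_inv γ := by funext i; simp [Function.comp]
  right_inv γ := by funext i; simp [Function.comp]
  map_mul' γ δ := rfl

def permAction (Γ : Type*) [Group Γ] : Equiv.Perm ℕ →* MulAut (ℕ → Γ) where
  toFun := permMulAut Γ
  map_one' := by ext γ i; rfl
  map_mul' s t := by ext γ i; rfl

/-- The (big) wreath product `(ℕ → Γ) ⋊ Perm ℕ`. -/
abbrev W (Γ : Type*) [Group Γ] := (ℕ → Γ) ⋊[permAction Γ] Equiv.Perm ℕ

/-- The wreath product `G = Γ ≀ 𝔖∞`, as the subgroup of `W Γ` of finitely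
supported elements. -/
def WG (Γ : Type*) [Group Γ] : Subgroup (W Γ) where
  carrier := {g | {i | g.right i ≠ i}.Finite ∧ {i | g.left i ≠ 1}.Finite}
  one_mem' := by
    constructor
    · convert Set.finite_empty using 1
      ext i; simp
    · convert Set.finite_empty using 1
      ext i; simp
  mul_mem' := by
    rintro a b ⟨ha1, ha2⟩ ⟨hb1, hb2⟩
    constructor
    · refine Set.Finite.subset (ha1.union hb1) fun i hi => ?_
      simp only [Set.mem_setOf_eq, Set.mem_union, SemidirectProduct.mul_right,
        Equiv.Perm.mul_apply] at hi ⊢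
      by_contra h
      push_neg at h
      rw [h.2, h.1] at hi
      exact hi rfl
    · refine Set.Finite.subset (ha2.union (hb2.image a.right)) fun i hi => ?_
      simp only [Set.mem_setOf_eq, SemidirectProduct.mul_left, Pi.mul_apply] at hi
      by_contra h
      simp only [Set.mem_union, Set.mem_setOf_eq, Set.mem_image, not_or, not_exists,
        not_and, not_not] at h
      obtain ⟨h1, h2⟩ := h
      apply hi
      have hb : b.left (a.right⁻¹ i) = 1 := by
        by_contra hc
        exact h2 (a.right⁻¹ i) hc (by simp)
      have hrfl : (permAction Γ a.right b.left) i = b.left (a.right⁻¹ i) := rfl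
      rw [h1, one_mul, hrfl, hb]
  inv_mem' := by
    rintro a ⟨ha1, ha2⟩
    constructor
    · refine Set.Finite.subset ha1 fun i hi => ?_
      simp only [Set.mem_setOf_eq, SemidirectProduct.inv_right] at hi ⊢
      intro h
      exact hi (Equiv.Perm.inv_eq_iff_eq.mpr h.symm)
    · refine Set.Finite.subset (Set.Finite.preimage (a.right.injective.injOn) ha2)
        fun i hi => ?_
      simp only [Set.mem_setOf_eq] at hi
      simp only [Set.mem_preimage, Set.mem_setOf_eq]
      intro h
      apply hi
      have hrfl : (a⁻¹).left i = (a.left (a.right i))⁻¹ := rfl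
      rw [hrfl, h, inv_one]

theorem mem_WG {Γ : Type*} [Group Γ] (g : W Γ) :
    g ∈ WG Γ ↔ {i | g.right i ≠ i}.Finite ∧ {i | g.left i ≠ 1}.Finite := Iff.rfl

/-- The canonical copy of `𝔖∞` inside `Γ ≀ 𝔖∞`. -/
def permW {Γ : Type*} [Group Γ] (s : SInf) : WG Γ :=
  ⟨SemidirectProduct.inr s.1, by
    rw [mem_WG]
    constructor
    · have h : (SemidirectProduct.inr s.1 : W Γ).right = s.1 := SemidirectProduct.right_inr _
      rw [h]
      exact s.2
    · convert Set.finite_empty using 1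
      ext i; simp⟩

/-- The canonical copy of `Γ^∞_e` inside `Γ ≀ 𝔖∞`. -/
def seqW {Γ : Type*} [Group Γ] (γ : GammaE Γ) : WG Γ :=
  ⟨SemidirectProduct.inl γ.1, by
    rw [mem_WG]
    constructor
    · convert Set.finite_empty using 1
      ext i; simp
    · have h : (SemidirectProduct.inl γ.1 : W Γ).left = γ.1 := SemidirectProduct.left_inl _
      rw [h]
      exact γ.2⟩

/-- The support of an element of `Γ ≀ 𝔖∞`. -/
def supp {Γ : Type*} [Group Γ] (g : WG Γ) : Set ℕ :=
  {i | (g : W Γ).right i ≠ i ∨ (g : W Γ).left i ≠ 1}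

/-- Positive definiteness of a function on a group. -/
def IsPosDef {G : Type*} [Group G] (φ : G → ℂ) : Prop :=
  ∀ (m : ℕ) (g : Fin m → G) (c : Fin m → ℂ),
    0 ≤ ∑ i, ∑ j, c i * (starRingEnd ℂ) (c j) * φ ((g j)⁻¹ * g i)

/-- A state on a group: normalized positive definite function. -/
def IsState {G : Type*} [Group G] (φ : G → ℂ) : Prop := φ 1 = 1 ∧ IsPosDef φ

/-- `𝔖∞`-centrality of a function on `Γ ≀ 𝔖∞`. -/
def IsSCentral {Γ : Type*} [Group Γ] (φ : WG Γ → ℂ) : Prop :=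
  ∀ (s : SInf) (g : WG Γ), φ (permW s * g * (permW s)⁻¹) = φ g

/-- The commutant of a set of bounded operators. -/
def commutant {H : Type*} [NormedAddCommGroup H] [InnerProductSpace ℂ H]
    (S : Set (H →L[ℂ] H)) : Set (H →L[ℂ] H) := {T | ∀ A ∈ S, T * A = A * T}

variable {Γ : Type*} [Group Γ]
variable {H : Type*} [NormedAddCommGroup H] [InnerProductSpace ℂ H] [CompleteSpace H]

/-- The image set `π(G)` of a representation. -/
def repSet (π : WG Γ →* (H →L[ℂ] H)) : Set (H →L[ℂ] H) := Set.range fun g : WG Γ => π g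

/-- The von Neumann algebra `π(G)''` (double commutant). -/
def vN (π : WG Γ →* (H →L[ℂ] H)) : Set (H →L[ℂ] H) := commutant (commutant (repSet π))

/-- The representation is factorial: the center `π(G)' ∩ π(G)''` consists of scalars. -/
def IsFactorial (π : WG Γ →* (H →L[ℂ] H)) : Prop :=
  ∀ T ∈ commutant (repSet π) ∩ vN π, ∃ c : ℂ, T = c • (1 : H →L[ℂ] H)

/-- `(π, H, ξ)` is a GNS triple for `φ`. -/
structure IsGNS (φ : WG Γ → ℂ) (π : WG Γ →* (H →L[ℂ] H)) (ξ : H) : Prop where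
  unitary : ∀ g, π g ∈ unitary (H →L[ℂ] H)
  norm_one : ‖ξ‖ = 1
  cyclic : Dense ((Submodule.span ℂ (Set.range fun g : WG Γ => π g ξ) : Submodule ℂ H) : Set H)
  inner_eq : ∀ g, φ g = ⟪ξ, π g ξ⟫

theorem swap_mem_SInf (a b : ℕ) : Equiv.swap a b ∈ SInf := by
  rw [mem_SInf]
  refine Set.Finite.subset ((Set.finite_singleton a).insert b) fun i hi => ?_
  simp only [Set.mem_setOf_eq] at hi
  simp only [Set.mem_insert_iff, Set.mem_singleton_iff]
  by_contra h
  push_neg at h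
  exact hi (Equiv.swap_apply_of_ne_of_ne h.2 h.1)

/-- The transposition `(a b)` as an element of `Γ ≀ 𝔖∞`. -/
def swapW {Γ : Type*} [Group Γ] (a b : ℕ) : WG Γ := permW ⟨Equiv.swap a b, swap_mem_SInf a b⟩

def omegaFun (n i : ℕ) : ℕ := if i < n then i + n else if i < 2 * n then i - n else i

theorem omegaFun_invol (n i : ℕ) : omegaFun n (omegaFun n i) = i := by
  unfold omegaFun
  split_ifs <;> first | contradiction | omega

/-- Olshanski's permutation `ω_n`. -/
def omegaPerm (n : ℕ) : Equiv.Perm ℕ :=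
  ⟨omegaFun n, omegaFun n, omegaFun_invol n, omegaFun_invol n⟩

theorem omegaPerm_mem (n : ℕ) : omegaPerm n ∈ SInf := by
  rw [mem_SInf]
  refine Set.Finite.subset (Set.finite_Iio (2 * n)) fun i hi => ?_
  simp only [Set.mem_setOf_eq] at hi
  simp only [Set.mem_Iio]
  by_contra h
  push_neg at h
  apply hi
  show omegaFun n i = i
  unfold omegaFun
  split_ifs <;> first | contradiction | omega

/-- `ω_n` as an element of `Γ ≀ 𝔖∞`. -/
def omegaW {Γ : Type*} [Group Γ] (n : ℕ) : WG Γ := permW ⟨omegaPerm n, omegaPerm_mem n⟩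

def sigmaFun (n i : ℕ) : ℕ := if i + 1 < n then i + 1 else if i + 1 = n then 0 else i

def sigmaInvFun (n i : ℕ) : ℕ := if i < n then (if i = 0 then n - 1 else i - 1) else i

theorem sigma_left_inv (n i : ℕ) : sigmaInvFun n (sigmaFun n i) = i := by
  unfold sigmaFun sigmaInvFun
  split_ifs <;> first | contradiction | omega

theorem sigma_right_inv (n i : ℕ) : sigmaFun n (sigmaInvFun n i) = i := by
  unfold sigmaFun sigmaInvFun
  split_ifs <;> first | contradiction | omega

/-- The cycle `σ_n = (0 1 2 ... n-1)`. -/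
def sigmaPerm (n : ℕ) : Equiv.Perm ℕ :=
  ⟨sigmaFun n, sigmaInvFun n, sigma_left_inv n, sigma_right_inv n⟩

theorem sigmaPerm_mem (n : ℕ) : sigmaPerm n ∈ SInf := by
  rw [mem_SInf]
  refine Set.Finite.subset (Set.finite_Iio n) fun i hi => ?_
  simp only [Set.mem_setOf_eq] at hi
  simp only [Set.mem_Iio]
  by_contra h
  push_neg at h
  apply hi
  show sigmaFun n i = i
  unfold sigmaFun
  split_ifs <;> first | contradiction | omega

/-- The cycle of `s` through the point `i` (the paper's `s_p` for the orbit `p` of `i`). -/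
def cycleAt (s : Equiv.Perm ℕ) (i : ℕ) : Equiv.Perm ℕ where
  toFun j := if s.SameCycle i j then s j else j
  invFun j := if s.SameCycle i j then s⁻¹ j else j
  left_inv j := by
    by_cases h : s.SameCycle i j
    · have h2 : s.SameCycle i (s j) := Equiv.Perm.sameCycle_apply_right.mpr h
      simp [h, h2]
    · simp [h]
  right_inv j := by
    by_cases h : s.SameCycle i j
    · have h2 : s.SameCycle i (s⁻¹ j) := Equiv.Perm.sameCycle_symm_apply_right.mpr h
      simp [h, h2]
    · simp [h]

theorem cycleAt_mem {s : Equiv.Perm ℕ} (hs : s ∈ SInf) (i : ℕ) : cycleAt s i ∈ SInf := by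
  rw [mem_SInf] at hs ⊢
  refine Set.Finite.subset hs fun j hj => ?_
  simp only [Set.mem_setOf_eq] at hj ⊢
  intro h
  apply hj
  show (if s.SameCycle i j then s j else j) = j
  split_ifs with hc
  · exact h
  · rfl

/-- The generalized cycle of `g = sγ` corresponding to the orbit of `i` under `s`. -/
def genCycle {Γ : Type*} [Group Γ] (g : WG Γ) (i : ℕ) : WG Γ :=
  permW ⟨cycleAt (g : W Γ).right i, cycleAt_mem g.2.1 i⟩ *
  seqW ⟨fun k => if ((g : W Γ).right).SameCycle i k then (g : W Γ).left ((g : W Γ).right k)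
      else 1, by
    rw [mem_GammaE]
    refine Set.Finite.subset (Set.Finite.preimage ((g : W Γ).right.injective.injOn) g.2.2)
      fun k hk => ?_
    simp only [Set.mem_setOf_eq] at hk
    simp only [Set.mem_preimage, Set.mem_setOf_eq]
    by_cases hsc : ((g : W Γ).right).SameCycle i k
    · rw [if_pos hsc] at hk; exact hk
    · rw [if_neg hsc] at hk; exact absurd rfl hk⟩

/-- The von Neumann algebra `𝔄_j` generated by `O_j` and the `π(γ)` with `γ` supported at `j`. -/
def Aj (π : WG Γ →* (H →L[ℂ] H)) (O : H →L[ℂ] H) (j : ℕ) : Set (H →L[ℂ] H) :=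
  commutant (commutant
    ({O} ∪ {T | ∃ γ : GammaE Γ, (∀ i, i ≠ j → (γ : ℕ → Γ) i = 1) ∧ T = π (seqW γ)}))

/-! ### Auxiliary material for the proof of `statement_3` -/

section Aux

variable {Γ : Type*} [Group Γ]

lemma omegaPerm_apply (n i : ℕ) : omegaPerm n i = omegaFun n i := rfl

lemma omegaPerm_inv (n : ℕ) : (omegaPerm n)⁻¹ = omegaPerm n := rfl

lemma omegaPerm_mul_self (n : ℕ) : omegaPerm n * omegaPerm n = 1 :=
  Equiv.ext fun i => omegaFun_invol n i

lemma omegaPerm_apply_of_lt {n i : ℕ} (h : i < n) : omegaPerm n i = i + n := by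
  show omegaFun n i = i + n
  unfold omegaFun
  split_ifs <;> omega

lemma omegaPerm_apply_add {n i : ℕ} (h : i < n) : omegaPerm n (i + n) = i := by
  show omegaFun n (i + n) = i
  unfold omegaFun
  split_ifs <;> omega

lemma omegaPerm_apply_of_ge {n i : ℕ} (h : 2 * n ≤ i) : omegaPerm n i = i := by
  show omegaFun n i = i
  unfold omegaFun
  split_ifs <;> omega

lemma omegaW_coe (n : ℕ) :
    ((omegaW n : WG Γ) : W Γ) = SemidirectProduct.inr (omegaPerm n) := rfl

lemma omegaW_mul_self (n : ℕ) : (omegaW n : WG Γ) * omegaW n = 1 := by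
  apply Subtype.ext
  show ((omegaW n : WG Γ) : W Γ) * ((omegaW n : WG Γ) : W Γ) = 1
  rw [omegaW_coe, ← map_mul, omegaPerm_mul_self, map_one]

lemma omegaW_inv (n : ℕ) : (omegaW n : WG Γ)⁻¹ = omegaW n :=
  inv_eq_of_mul_eq_one_right (omegaW_mul_self n)

lemma permAction_apply (s : Equiv.Perm ℕ) (γ : ℕ → Γ) (i : ℕ) :
    (permAction Γ s γ) i = γ (s⁻¹ i) := rfl

lemma conj_right (n : ℕ) (g : WG Γ) :
    ((omegaW n * g * omegaW n : WG Γ) : W Γ).right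
      = omegaPerm n * (g : W Γ).right * omegaPerm n := by
  simp [omegaW_coe]

lemma conj_left (n : ℕ) (g : WG Γ) :
    ((omegaW n * g * omegaW n : WG Γ) : W Γ).left
      = fun i => (g : W Γ).left (omegaPerm n i) := by
  funext i
  have h1 : ((omegaW n * g * omegaW n : WG Γ) : W Γ)
      = SemidirectProduct.inr (omegaPerm n) * (g : W Γ) *
        SemidirectProduct.inr (omegaPerm n) := by
    simp [omegaW_coe]
  rw [h1]
  simp only [SemidirectProduct.mul_left, SemidirectProduct.left_inr,
    SemidirectProduct.mul_right, SemidirectProduct.right_inr, map_one, mul_one, one_mul]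
  rw [permAction_apply, omegaPerm_inv]

/-- `Phi φ` is the "regular" extension of `φ` to the wreath product. -/
def Phi (φ : Γ → ℂ) (g : WG Γ) : ℂ :=
  if (g : W Γ).right = 1 then ∏ᶠ k, φ ((g : W Γ).left k) else 0

lemma exists_bound {S : Set ℕ} (hS : S.Finite) : ∃ M, ∀ i, M ≤ i → i ∉ S := by
  obtain ⟨b, hb⟩ := hS.bddAbove
  exact ⟨b + 1, fun i hi hiS => by have := hb hiS; omega⟩

lemma perm_fix_inv {p : Equiv.Perm ℕ} {i : ℕ} (h : p i = i) : p⁻¹ i = i := by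
  rw [Equiv.Perm.inv_eq_iff_eq]; exact h.symm

/-- Exact conjugation invariance of `Phi` under `ω_n`. -/
lemma Phi_conj (φ : Γ → ℂ) (n : ℕ) (g : WG Γ) :
    Phi φ (omegaW n * g * omegaW n) = Phi φ g := by
  have hr := conj_right n g
  have hl := conj_left n g
  have hcond : (((omegaW n * g * omegaW n : WG Γ) : W Γ).right = 1)
      ↔ ((g : W Γ).right = 1) := by
    rw [hr]
    constructor
    · intro h
      have : (g : W Γ).right = (omegaPerm n)⁻¹ * 1 * (omegaPerm n)⁻¹ := by
        rw [← h]; group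
      simpa [omegaPerm_inv, omegaPerm_mul_self] using this
    · intro h
      rw [h, mul_one, omegaPerm_mul_self]
  unfold Phi
  by_cases h : (g : W Γ).right = 1
  · rw [if_pos (hcond.mpr h), if_pos h, hl]
    exact finprod_comp_equiv (omegaPerm n) (f := fun k => φ ((g : W Γ).left k))
  · rw [if_neg (fun hc => h (hcond.mp hc)), if_neg h]

/-- The key asymptotic multiplicativity of `Phi`. -/
lemma Phi_asymp (φ : Γ → ℂ) (hφone : φ 1 = 1) (a g : WG Γ) :
    ∃ n₀ : ℕ, ∀ n, n₀ ≤ n →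
      Phi φ (a * (omegaW n * g * omegaW n)) = Phi φ a * Phi φ g := by
  obtain ⟨M₁, hM₁⟩ := exists_bound a.2.1
  obtain ⟨M₂, hM₂⟩ := exists_bound a.2.2
  obtain ⟨M₃, hM₃⟩ := exists_bound g.2.1
  obtain ⟨M₄, hM₄⟩ := exists_bound g.2.2
  refine ⟨max (max M₁ M₂) (max M₃ M₄), fun n hn => ?_⟩
  set A : W Γ := (a : W Γ) with hA
  set B : W Γ := (g : W Γ) with hB
  have hp : ∀ i, n ≤ i → A.right i = i := fun i hi => by
    by_contra hc
    exact hM₁ i (by omega) hc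
  have hα : ∀ i, n ≤ i → A.left i = 1 := fun i hi => by
    by_contra hc
    exact hM₂ i (by omega) hc
  have hs : ∀ i, n ≤ i → B.right i = i := fun i hi => by
    by_contra hc
    exact hM₃ i (by omega) hc
  have hγ : ∀ i, n ≤ i → B.left i = 1 := fun i hi => by
    by_contra hc
    exact hM₄ i (by omega) hc
  set w : Equiv.Perm ℕ := omegaPerm n with hw
  -- coordinates of the product
  have hxr : ((a * (omegaW n * g * omegaW n) : WG Γ) : W Γ).right
      = A.right * (w * B.right * w) := by
    have h0 := conj_right (Γ := Γ) n g
    simp only [Subgroup.coe_mul] at h0 ⊢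
    rw [SemidirectProduct.mul_right, h0, hA, hB, hw]
  have hxl : ((a * (omegaW n * g * omegaW n) : WG Γ) : W Γ).left
      = fun i => A.left i * B.left (w (A.right⁻¹ i)) := by
    funext i
    have hcl := conj_left (Γ := Γ) n g
    simp only [Subgroup.coe_mul] at hcl ⊢
    rw [SemidirectProduct.mul_left, hcl, Pi.mul_apply, permAction_apply, hA, hB, hw]
  -- the support of w * B.right * w is contained in [n, 2n)
  have hq : ∀ i, (i < n ∨ 2 * n ≤ i) → (w * B.right * w) i = i := by
    intro i hi
    rcases hi with hi | hi
    · have h1 : w i = i + n := omegaPerm_apply_of_lt hi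
      have h2 : B.right (i + n) = i + n := hs _ (by omega)
      simp only [Equiv.Perm.mul_apply]
      rw [h1, h2, omegaPerm_apply_add hi]
    · have h1 : w i = i := omegaPerm_apply_of_ge hi
      have h2 : B.right i = i := hs _ (by omega)
      simp only [Equiv.Perm.mul_apply]
      rw [h1, h2, h1]
  by_cases hps : A.right = 1 ∧ B.right = 1
  · obtain ⟨hp1, hs1⟩ := hps
    have hxr1 : ((a * (omegaW n * g * omegaW n) : WG Γ) : W Γ).right = 1 := by
      rw [hxr, hp1, hs1, one_mul, mul_one, omegaPerm_mul_self]
    have hl' : ((a * (omegaW n * g * omegaW n) : WG Γ) : W Γ).left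
        = fun i => A.left i * B.left (w i) := by
      rw [hxl, hp1]
      funext i
      simp
    unfold Phi
    rw [if_pos hxr1, if_pos hp1, if_pos hs1, hl']
    have hpt : ∀ i, φ (A.left i * B.left (w i)) = φ (A.left i) * φ (B.left (w i)) := by
      intro i
      by_cases hi : i < n
      · have : B.left (w i) = 1 := by
          rw [omegaPerm_apply_of_lt hi]
          exact hγ _ (by omega)
        rw [this, mul_one, hφone, mul_one]
      · have : A.left i = 1 := hα _ (by omega)
        rw [this, one_mul, hφone, one_mul]
    have hfin1 : (Function.mulSupport fun i => φ (A.left i)).Finite := by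
      refine Set.Finite.subset a.2.2 fun i hi => ?_
      simp only [Function.mem_mulSupport] at hi
      simp only [Set.mem_setOf_eq]
      intro hc
      exact hi (by rw [hc, hφone])
    have hfin2 : (Function.mulSupport fun i => φ (B.left (w i))).Finite := by
      refine Set.Finite.subset (Set.Finite.preimage (w.injective.injOn) g.2.2)
        fun i hi => ?_
      simp only [Function.mem_mulSupport] at hi
      simp only [Set.mem_preimage, Set.mem_setOf_eq]
      intro hc
      exact hi (by rw [hc, hφone])
    calc (∏ᶠ i, φ (A.left i * B.left (w i)))
        = ∏ᶠ i, φ (A.left i) * φ (B.left (w i)) := by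
          exact finprod_congr hpt
      _ = (∏ᶠ i, φ (A.left i)) * ∏ᶠ i, φ (B.left (w i)) :=
          finprod_mul_distrib hfin1 hfin2
      _ = (∏ᶠ i, φ (A.left i)) * ∏ᶠ i, φ (B.left i) := by
          rw [finprod_comp_equiv w (f := fun k => φ (B.left k))]
  · have hne : ((a * (omegaW n * g * omegaW n) : WG Γ) : W Γ).right ≠ 1 := by
      rw [hxr]
      intro hc
      apply hps
      have hqinv : A.right = (w * B.right * w)⁻¹ := by
        rw [eq_inv_iff_mul_eq_one]; exact hc
      have hA1 : A.right = 1 := by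
        apply Equiv.ext
        intro i
        by_cases hi : n ≤ i
        · exact hp i hi
        · have : (w * B.right * w) i = i := hq i (Or.inl (by omega))
          rw [hqinv]
          exact perm_fix_inv this
      constructor
      · exact hA1
      · -- from hc and hA1 : w * B.right * w = 1
        have h2 : w * B.right * w = 1 := by
          rw [hA1, one_mul] at hc; exact hc
        have h3 : B.right = w⁻¹ * 1 * w⁻¹ := by
          rw [← h2]; group
        have h4 : w⁻¹ = w := by rw [hw, omegaPerm_inv]
        rw [h3, h4, mul_one, hw]
        exact omegaPerm_mul_self n
    unfold Phi
    rw [if_neg hne]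
    rcases not_and_or.mp hps with h | h
    · rw [if_neg h, zero_mul]
    · rw [if_neg h, mul_zero]

end Aux

section Aux2

variable {Γ : Type*} [Group Γ]
variable {H : Type*} [NormedAddCommGroup H] [InnerProductSpace ℂ H] [CompleteSpace H]

lemma inner_eq_Phi (φ : Γ → ℂ) (π : WG Γ →* (H →L[ℂ] H)) (ξ : H)
    (hrep : ∀ (s : SInf) (γ : GammaE Γ),
      ⟪ξ, π (permW s * seqW γ) ξ⟫ =
        if (s : Equiv.Perm ℕ) = 1 then ∏ᶠ k, φ ((γ : ℕ → Γ) k) else 0)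
    (g : WG Γ) : ⟪ξ, π g ξ⟫ = Phi φ g := by
  obtain ⟨⟨l, r⟩, hg⟩ := g
  have hr : r ∈ SInf := hg.1
  have hγ' : (fun i => l (r i)) ∈ GammaE Γ := by
    have h0 : {i | l (r i) ≠ 1} = ⇑r ⁻¹' {j | l j ≠ 1} := rfl
    show Set.Finite _
    rw [h0]
    exact Set.Finite.preimage (r.injective.injOn) hg.2
  have hdecomp : (⟨⟨l, r⟩, hg⟩ : WG Γ)
      = permW ⟨r, hr⟩ * seqW ⟨fun i => l (r i), hγ'⟩ := by
    apply Subtype.ext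
    show (⟨l, r⟩ : W Γ)
      = SemidirectProduct.inr r * SemidirectProduct.inl (fun i => l (r i))
    apply SemidirectProduct.ext
    · funext i
      simp only [SemidirectProduct.mul_left, SemidirectProduct.left_inr,
        SemidirectProduct.left_inl, SemidirectProduct.right_inr, one_mul]
      rw [permAction_apply, show r (r⁻¹ i) = i from Equiv.Perm.eq_inv_iff_eq.mp rfl]
    · simp only [SemidirectProduct.mul_right, SemidirectProduct.right_inr,
        SemidirectProduct.right_inl, mul_one]
  conv_lhs => rw [hdecomp]
  rw [hrep]
  show (if r = 1 then ∏ᶠ k, φ (l (r k)) else 0)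
      = if r = 1 then ∏ᶠ k, φ (l k) else 0
  by_cases h : r = 1
  · simp [h]
  · simp [h]

lemma norm_eq_of_inner_self_eq {x y : H} (h : ⟪x, x⟫ = ⟪y, y⟫) : ‖x‖ = ‖y‖ := by
  have h2 := h
  rw [inner_self_eq_norm_sq_to_K (𝕜 := ℂ), inner_self_eq_norm_sq_to_K (𝕜 := ℂ)] at h2
  have h3 : ‖x‖ ^ 2 = ‖y‖ ^ 2 := by exact_mod_cast h2
  nlinarith [norm_nonneg x, norm_nonneg y]

lemma exists_Rn (φ : Γ → ℂ) (π : WG Γ →* (H →L[ℂ] H)) (ξ : H)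
    (hΦ' : ∀ g h : WG Γ, ⟪π g ξ, π h ξ⟫ = Phi φ (g⁻¹ * h))
    (hd : Dense ((Submodule.span ℂ (Set.range fun g : WG Γ => π g ξ) : Submodule ℂ H) : Set H))
    (n : ℕ) :
    ∃ R : H →L[ℂ] H,
      (∀ g : WG Γ, R (π g ξ) = π (g * omegaW n) ξ) ∧ ∀ x, ‖R x‖ = ‖x‖ := by
  classical
  set v : WG Γ → H := fun g => π g ξ with hv
  set vs : WG Γ → H := fun g => π (g * omegaW n) ξ with hvs
  set P : (WG Γ →₀ ℂ) →ₗ[ℂ] H := Finsupp.linearCombination ℂ v with hP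
  set Q : (WG Γ →₀ ℂ) →ₗ[ℂ] H := Finsupp.linearCombination ℂ vs with hQ
  have hbase : ∀ g h : WG Γ, ⟪vs g, vs h⟫ = ⟪v g, v h⟫ := by
    intro g h
    rw [hvs, hv]
    rw [hΦ', hΦ']
    have h1 : (g * omegaW n)⁻¹ * (h * omegaW n) = omegaW n * (g⁻¹ * h) * omegaW n := by
      rw [mul_inv_rev, omegaW_inv]; group
    rw [h1, Phi_conj]
  have key : ∀ c d : WG Γ →₀ ℂ, ⟪Q c, Q d⟫ = ⟪P c, P d⟫ := by
    intro c d
    induction c using Finsupp.induction_linear with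
    | zero => simp
    | add f g hf hg => simp only [map_add, inner_add_left, hf, hg]
    | single a b =>
      induction d using Finsupp.induction_linear with
      | zero => simp
      | add f g hf hg => simp only [map_add, inner_add_right, hf, hg]
      | single a' b' =>
        simp only [hP, hQ, Finsupp.linearCombination_single]
        simp only [inner_smul_left, inner_smul_right]
        rw [hbase]
  have hnormPQ : ∀ c, ‖Q c‖ = ‖P c‖ := fun c => norm_eq_of_inner_self_eq (key c c)
  have hker : LinearMap.ker P ≤ LinearMap.ker Q := by
    intro c hc
    rw [LinearMap.mem_ker] at hc ⊢
    rw [← norm_eq_zero, hnormPQ, hc, norm_zero]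
  set f0 : LinearMap.range P →ₗ[ℂ] H :=
    ((LinearMap.ker P).liftQ Q hker).comp P.quotKerEquivRange.symm.toLinearMap with hf0def
  have hf0 : ∀ c, f0 ⟨P c, LinearMap.mem_range_self P c⟩ = Q c := by
    intro c
    have h1 : P.quotKerEquivRange.symm ⟨P c, LinearMap.mem_range_self P c⟩
        = Submodule.Quotient.mk c := by
      rw [LinearEquiv.symm_apply_eq]
      apply Subtype.ext
      exact (LinearMap.quotKerEquivRange_apply_mk P c).symm
    simp only [hf0def, LinearMap.comp_apply, LinearEquiv.coe_toLinearMap]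
    rw [h1, Submodule.liftQ_apply]
  have hf0norm : ∀ x : LinearMap.range P, ‖f0 x‖ = ‖x‖ := by
    rintro ⟨x, hx⟩
    obtain ⟨c, rfl⟩ := hx
    calc ‖f0 ⟨P c, _⟩‖ = ‖Q c‖ := by rw [hf0 c]
      _ = ‖P c‖ := hnormPQ c
      _ = ‖(⟨P c, LinearMap.mem_range_self P c⟩ : LinearMap.range P)‖ := rfl
  have hdense2 : Dense ((LinearMap.range P : Submodule ℂ H) : Set H) := by
    rw [hP, Finsupp.range_linearCombination]
    exact hd
  have hdr : DenseRange ⇑((LinearMap.range P).subtypeL) := by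
    have h0 : Set.range ⇑((LinearMap.range P).subtypeL)
        = ((LinearMap.range P : Submodule ℂ H) : Set H) := Subtype.range_val
    rw [DenseRange, h0]
    exact hdense2
  have hui : IsUniformInducing ⇑((LinearMap.range P).subtypeL) :=
    isometry_subtype_coe.isUniformInducing
  set fI : LinearMap.range P →ₗᵢ[ℂ] H := ⟨f0, hf0norm⟩ with hfIdef
  set R : H →L[ℂ] H :=
    fI.toContinuousLinearMap.extend ((LinearMap.range P).subtypeL) with hRdef
  have hRD : ∀ x : LinearMap.range P, R ((x : H)) = f0 x := by
    intro x
    have h1 := ContinuousLinearMap.extend_eq (f := fI.toContinuousLinearMap)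
      (e := (LinearMap.range P).subtypeL) hdr hui x
    exact h1
  refine ⟨R, ?_, ?_⟩
  · intro g
    have hPg : P (Finsupp.single g 1) = π g ξ := by
      simp [hP, hv, Finsupp.linearCombination_single]
    have hmem : π g ξ ∈ LinearMap.range P := ⟨Finsupp.single g 1, hPg⟩
    have h1 : R (π g ξ) = f0 ⟨π g ξ, hmem⟩ := hRD ⟨π g ξ, hmem⟩
    have h2 : (⟨π g ξ, hmem⟩ : LinearMap.range P)
        = ⟨P (Finsupp.single g 1), LinearMap.mem_range_self _ _⟩ := by
      apply Subtype.ext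
      exact hPg.symm
    rw [h1, h2, hf0]
    simp [hQ, hvs, Finsupp.linearCombination_single]
  · have heq : (fun x : H => ‖R x‖) = fun x => ‖x‖ := by
      apply Continuous.ext_on hdense2 (R.continuous.norm) continuous_norm
      intro x hx
      show ‖R x‖ = ‖x‖
      rw [hRD ⟨x, hx⟩]
      exact hf0norm ⟨x, hx⟩
    exact fun x => congrFun heq x

end Aux2

theorem statement_3 {Γ : Type*} [Group Γ] {H : Type*} [NormedAddCommGroup H]
    [InnerProductSpace ℂ H] [CompleteSpace H]
    (φ : Γ → ℂ) (hφone : φ 1 = 1)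
    (π : WG Γ →* (H →L[ℂ] H)) (ξ : H)
    (hunit : ∀ g, π g ∈ unitary (H →L[ℂ] H))
    (hnorm : ‖ξ‖ = 1)
    (hcyclic :
      Dense ((Submodule.span ℂ (Set.range fun g : WG Γ => π g ξ) : Submodule ℂ H) : Set H))
    (hrep : ∀ (s : SInf) (γ : GammaE Γ),
      ⟪ξ, π (permW s * seqW γ) ξ⟫ =
        if (s : Equiv.Perm ℕ) = 1 then ∏ᶠ k, φ ((γ : ℕ → Γ) k) else 0) :
    IsFactorial π := by
  classical
  intro T hT
  have hπadj : ∀ g : WG Γ, ContinuousLinearMap.adjoint (π g) = π g⁻¹ := by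
    intro g
    have h1 := (Unitary.mem_iff.mp (hunit g)).1
    have h2 : π g * π g⁻¹ = 1 := by rw [← map_mul, mul_inv_cancel, map_one]
    calc ContinuousLinearMap.adjoint (π g) = star (π g) :=
          (ContinuousLinearMap.star_eq_adjoint _).symm
      _ = star (π g) * (π g * π g⁻¹) := by rw [h2, mul_one]
      _ = star (π g) * π g * π g⁻¹ := by rw [mul_assoc]
      _ = π g⁻¹ := by rw [h1, one_mul]
  have hΦ : ∀ g : WG Γ, ⟪ξ, π g ξ⟫ = Phi φ g := inner_eq_Phi φ π ξ hrep
  have hmulv : ∀ (g h : WG Γ) (x : H), π g (π h x) = π (g * h) x := by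
    intro g h x
    rw [map_mul]
    rfl
  have hξ1 : π (1 : WG Γ) ξ = ξ := by rw [map_one]; rfl
  have hΦ' : ∀ g h : WG Γ, ⟪π g ξ, π h ξ⟫ = Phi φ (g⁻¹ * h) := by
    intro g h
    have h1 := ContinuousLinearMap.adjoint_inner_left (π g⁻¹) (π h ξ) ξ
    rw [hπadj, inv_inv] at h1
    rw [h1, hmulv, hΦ]
  choose R hR1 hR2 using exists_Rn φ π ξ hΦ' hcyclic
  have hinner : ∀ (n : ℕ) (x y : H), ⟪R n x, R n y⟫ = ⟪x, y⟫ := by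
    intro n x y
    exact LinearIsometry.inner_map_map ⟨(R n : H →ₗ[ℂ] H), hR2 n⟩ x y
  have hRcomm : ∀ n : ℕ, R n ∈ commutant (repSet π) := by
    intro n A hA
    obtain ⟨g, rfl⟩ := hA
    apply ContinuousLinearMap.ext_on hcyclic
    rintro x ⟨h, rfl⟩
    show (R n) ((π g) ((π h) ξ)) = (π g) ((R n) ((π h) ξ))
    rw [hmulv, hR1, hR1, hmulv, mul_assoc]
  have hTπ : ∀ (g : WG Γ) (x : H), T (π g x) = π g (T x) := by
    intro g x
    have h1 : T * π g = π g * T := hT.1 (π g) ⟨g, rfl⟩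
    calc T (π g x) = (T * π g) x := rfl
      _ = (π g * T) x := by rw [h1]
      _ = π g (T x) := rfl
  have hTR : ∀ (n : ℕ) (x : H), T (R n x) = R n (T x) := by
    intro n x
    have h1 : T * R n = R n * T := hT.2 (R n) (hRcomm n)
    calc T (R n x) = (T * R n) x := rfl
      _ = (R n * T) x := by rw [h1]
      _ = R n (T x) := rfl
  have hRξ : ∀ n, R n ξ = π (omegaW n) ξ := by
    intro n
    have h0 := hR1 n 1
    rw [hξ1, one_mul] at h0
    exact h0
  have hconst : ∀ (n : ℕ) (g : WG Γ),
      ⟪ξ, T (π (omegaW n * g * omegaW n) ξ)⟫ = ⟪ξ, T (π g ξ)⟫ := by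
    intro n g
    have e1 : π (omegaW n * g * omegaW n) ξ = π (omegaW n) (R n (π g ξ)) := by
      rw [hR1, hmulv, mul_assoc]
    rw [e1, hTπ, hTR]
    have e2 : ⟪ξ, (π (omegaW n)) (R n (T (π g ξ)))⟫ = ⟪R n ξ, R n (T (π g ξ))⟫ := by
      rw [← ContinuousLinearMap.adjoint_inner_left (π (omegaW n)) (R n (T (π g ξ))) ξ,
        hπadj, omegaW_inv, ← hRξ]
    rw [e2, hinner]
  have hvnorm : ∀ g : WG Γ, ‖π g ξ‖ = 1 := by
    intro g
    have h1 : ⟪π g ξ, π g ξ⟫ = ⟪ξ, ξ⟫ := by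
      rw [hΦ' g g, inv_mul_cancel]
      have h0 := hΦ (1 : WG Γ)
      rw [hξ1] at h0
      rw [← h0]
    rw [← hnorm]
    exact norm_eq_of_inner_self_eq h1
  have hweak : ∀ (g : WG Γ) (y : H),
      Tendsto (fun n => ⟪y, π (omegaW n * g * omegaW n) ξ⟫) atTop
        (𝓝 (Phi φ g * ⟪y, ξ⟫)) := by
    intro g
    have hgen : ∀ h : WG Γ,
        ∀ᶠ n in atTop,
          ⟪π h ξ, π (omegaW n * g * omegaW n) ξ⟫ = Phi φ g * ⟪π h ξ, ξ⟫ := by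
      intro h
      obtain ⟨n₀, hn₀⟩ := Phi_asymp φ hφone h⁻¹ g
      rw [eventually_atTop]
      refine ⟨n₀, fun n hn => ?_⟩
      rw [hΦ', hn₀ n hn]
      have e2 : ⟪π h ξ, ξ⟫ = Phi φ h⁻¹ := by
        have h0 := hΦ' h 1
        rw [hξ1, mul_one] at h0
        exact h0
      rw [e2]
      ring
    have hspan : ∀ y ∈ Submodule.span ℂ (Set.range fun g : WG Γ => π g ξ),
        Tendsto (fun n => ⟪y, π (omegaW n * g * omegaW n) ξ⟫) atTop
          (𝓝 (Phi φ g * ⟪y, ξ⟫)) := by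
      intro y hy
      induction hy using Submodule.span_induction with
      | mem x hx =>
        obtain ⟨h, rfl⟩ := hx
        exact tendsto_const_nhds.congr'
          (by filter_upwards [hgen h] with n hn using hn.symm)
      | zero =>
        simpa using (tendsto_const_nhds :
          Tendsto (fun _ : ℕ => (0 : ℂ)) atTop (𝓝 0))
      | add x z hx hz ihx ihz =>
        have h2 : Phi φ g * ⟪x + z, ξ⟫ = Phi φ g * ⟪x, ξ⟫ + Phi φ g * ⟪z, ξ⟫ := by
          rw [inner_add_left, mul_add]
        rw [h2]
        exact Tendsto.congr (fun n => (inner_add_left _ _ _).symm) (ihx.add ihz)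
      | smul a x hx ihx =>
        have h2 : Phi φ g * ⟪a • x, ξ⟫ = (starRingEnd ℂ) a * (Phi φ g * ⟪x, ξ⟫) := by
          rw [inner_smul_left]
          ring
        rw [h2]
        exact Tendsto.congr (fun n => (inner_smul_left _ _ _).symm) (ihx.const_mul _)
    intro y
    rw [Metric.tendsto_atTop]
    intro ε hε
    set C : ℝ := 1 + ‖Phi φ g • ξ‖ with hC
    have hC1 : (1 : ℝ) ≤ C := by
      have h0 : (0 : ℝ) ≤ ‖Phi φ g • ξ‖ := norm_nonneg _
      rw [hC]; linarith
    have hCpos : (0 : ℝ) < C := lt_of_lt_of_le one_pos hC1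
    have hvb : ∀ n : ℕ, ‖π (omegaW n * g * omegaW n) ξ - Phi φ g • ξ‖ ≤ C := by
      intro n
      calc ‖π (omegaW n * g * omegaW n) ξ - Phi φ g • ξ‖
          ≤ ‖π (omegaW n * g * omegaW n) ξ‖ + ‖Phi φ g • ξ‖ := norm_sub_le _ _
        _ = 1 + ‖Phi φ g • ξ‖ := by rw [hvnorm]
        _ = C := hC.symm
    have hyc : y ∈ closure
        ((Submodule.span ℂ (Set.range fun g : WG Γ => π g ξ) : Submodule ℂ H) : Set H) := by
      rw [hcyclic.closure_eq]
      exact Set.mem_univ y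
    rw [Metric.mem_closure_iff] at hyc
    obtain ⟨y', hy'mem, hy'close⟩ := hyc (ε / (2 * C)) (by positivity)
    obtain ⟨N, hN⟩ := Metric.tendsto_atTop.mp (hspan y' hy'mem) (ε / 2) (by positivity)
    refine ⟨N, fun n hn => ?_⟩
    have hsplit : ⟪y, π (omegaW n * g * omegaW n) ξ⟫ - Phi φ g * ⟪y, ξ⟫
        = ⟪y - y', π (omegaW n * g * omegaW n) ξ - Phi φ g • ξ⟫
          + (⟪y', π (omegaW n * g * omegaW n) ξ⟫ - Phi φ g * ⟪y', ξ⟫) := by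
      simp only [inner_sub_left, inner_sub_right, inner_smul_right]
      ring
    rw [dist_eq_norm, hsplit]
    have hb1 : ‖⟪y - y', π (omegaW n * g * omegaW n) ξ - Phi φ g • ξ⟫‖
        ≤ ‖y - y'‖ * C := by
      calc ‖⟪y - y', π (omegaW n * g * omegaW n) ξ - Phi φ g • ξ⟫‖
          ≤ ‖y - y'‖ * ‖π (omegaW n * g * omegaW n) ξ - Phi φ g • ξ‖ :=
            norm_inner_le_norm _ _
        _ ≤ ‖y - y'‖ * C := by
            exact mul_le_mul_of_nonneg_left (hvb n) (norm_nonneg _)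
    have hb2 : ‖⟪y', π (omegaW n * g * omegaW n) ξ⟫ - Phi φ g * ⟪y', ξ⟫‖ < ε / 2 := by
      have h0 := hN n hn
      rw [dist_eq_norm] at h0
      exact h0
    have hyy' : ‖y - y'‖ < ε / (2 * C) := by
      rw [← dist_eq_norm]
      exact hy'close
    have hfin := norm_add_le
      (⟪y - y', π (omegaW n * g * omegaW n) ξ - Phi φ g • ξ⟫)
      (⟪y', π (omegaW n * g * omegaW n) ξ⟫ - Phi φ g * ⟪y', ξ⟫)
    have h5 : ‖y - y'‖ * C < ε / (2 * C) * C :=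
      mul_lt_mul_of_pos_right hyy' hCpos
    have h6 : ε / (2 * C) * C = ε / 2 := by
      field_simp
    calc ‖⟪y - y', π (omegaW n * g * omegaW n) ξ - Phi φ g • ξ⟫
          + (⟪y', π (omegaW n * g * omegaW n) ξ⟫ - Phi φ g * ⟪y', ξ⟫)‖
        ≤ ‖⟪y - y', π (omegaW n * g * omegaW n) ξ - Phi φ g • ξ⟫‖
          + ‖⟪y', π (omegaW n * g * omegaW n) ξ⟫ - Phi φ g * ⟪y', ξ⟫‖ := hfin
      _ < ε / (2 * C) * C + ε / 2 := add_lt_add (lt_of_le_of_lt hb1 h5) hb2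
      _ = ε := by rw [h6]; ring
  have hkey : ∀ g : WG Γ, ⟪ξ, T (π g ξ)⟫ = Phi φ g * ⟪ξ, T ξ⟫ := by
    intro g
    have hadjT : ∀ x : H, ⟪ξ, T x⟫ = ⟪ContinuousLinearMap.adjoint T ξ, x⟫ := fun x =>
      (ContinuousLinearMap.adjoint_inner_left T x ξ).symm
    have h1 := hweak g (ContinuousLinearMap.adjoint T ξ)
    have h2 : Tendsto (fun n => ⟪ξ, T (π (omegaW n * g * omegaW n) ξ)⟫) atTop
        (𝓝 (Phi φ g * ⟪ξ, T ξ⟫)) := by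
      rw [show Phi φ g * ⟪ξ, T ξ⟫
          = Phi φ g * ⟪ContinuousLinearMap.adjoint T ξ, ξ⟫ by rw [← hadjT]]
      exact h1.congr (fun n => (hadjT _).symm)
    have h3 : Tendsto (fun n => ⟪ξ, T (π (omegaW n * g * omegaW n) ξ)⟫) atTop
        (𝓝 (⟪ξ, T (π g ξ)⟫)) :=
      tendsto_const_nhds.congr (fun n => (hconst n g).symm)
    exact tendsto_nhds_unique h3 h2
  set c : ℂ := ⟪ξ, T ξ⟫ with hc
  have hu : T ξ = c • ξ := by
    have horto : ∀ y ∈ Submodule.span ℂ (Set.range fun g : WG Γ => π g ξ),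
        ⟪y, T ξ - c • ξ⟫ = 0 := by
      intro y hy
      induction hy using Submodule.span_induction with
      | mem x hx =>
        obtain ⟨h, rfl⟩ := hx
        rw [inner_sub_right, inner_smul_right]
        have e1 : ⟪π h ξ, T ξ⟫ = Phi φ h⁻¹ * c := by
          have h2 := ContinuousLinearMap.adjoint_inner_left (π h⁻¹) (T ξ) ξ
          rw [hπadj, inv_inv] at h2
          rw [h2, ← hTπ, hkey]
        have e2 : ⟪π h ξ, ξ⟫ = Phi φ h⁻¹ := by
          have h0 := hΦ' h 1
          rw [hξ1, mul_one] at h0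
          exact h0
        rw [e1, e2]
        ring
      | zero => simp
      | add x z hx hz ihx ihz => rw [inner_add_left, ihx, ihz, add_zero]
      | smul a x hx ihx => rw [inner_smul_left, ihx, mul_zero]
    have hfun : (fun y : H => ⟪y, T ξ - c • ξ⟫) = fun _ => (0 : ℂ) :=
      Continuous.ext_on hcyclic (continuous_id.inner continuous_const) continuous_const
        (fun y hy => horto y hy)
    have h0 : ⟪T ξ - c • ξ, T ξ - c • ξ⟫ = 0 := congrFun hfun (T ξ - c • ξ)
    exact sub_eq_zero.mp (inner_self_eq_zero.mp h0)
  refine ⟨c, ?_⟩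
  apply ContinuousLinearMap.ext_on hcyclic
  rintro x ⟨g, rfl⟩
  show T (π g ξ) = (c • (1 : H →L[ℂ] H)) (π g ξ)
  rw [hTπ, hu, map_smul]
  simp

end DN
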